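/- Let f: ℝⁿ → ℝ be Lipschitz continuous near a point x̂. Suppose (x_ℓ), (α_ℓ), (d_ℓ) are sequences with x_ℓ → x̂, α_ℓ → 0⁺, d_ℓ → d ≠ 0 (with ‖d_ℓ‖ bounded between positive constants), and f(x_ℓ + α_ℓ d_ℓ) - f(x_ℓ) ≥ -ρ(α_ℓ) for all ℓ, where ρ(α)/α → 0 as α → 0⁺. Then the Clarke directional derivative satisfies f°(x̂; d) ≥ 0. -/

import Mathlib

set_option maxHeartbeats 1000000

/-- The Clarke generalized directional derivative
`f°(x; v) = limsup_{y → x, t → 0⁺} (f(y + t v) - f(y))/t`. -/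
noncomputable def clarkeDeriv {n : ℕ} (f : EuclideanSpace ℝ (Fin n) → ℝ)
    (x v : EuclideanSpace ℝ (Fin n)) : ℝ :=
  Filter.limsup (fun p : EuclideanSpace ℝ (Fin n) × ℝ => (f (p.1 + p.2 • v) - f p.1) / p.2)
    ((nhds x) ×ˢ (nhdsWithin 0 (Set.Ioi 0)))

/-- refining-sequence lemma. If `f` is Lipschitz near `xhat`, the points
`x_ℓ → xhat`, stepsizes `α_ℓ → 0⁺`, directions `d_ℓ → d ≠ 0` with norms bounded between
positive constants, sufficient decrease fails at every `ℓ`, and `ρ(α)/α → 0` as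
`α → 0⁺`, then `f°(xhat; d) ≥ 0`. -/
theorem stmt7 {n : ℕ} (f : EuclideanSpace ℝ (Fin n) → ℝ)
    (xhat : EuclideanSpace ℝ (Fin n)) (L r : ℝ) (hr : 0 < r) (hL : 0 ≤ L)
    (hlip : ∀ y ∈ Metric.ball xhat r, ∀ z ∈ Metric.ball xhat r, |f y - f z| ≤ L * ‖y - z‖)
    (xs : ℕ → EuclideanSpace ℝ (Fin n)) (αs : ℕ → ℝ)
    (ds : ℕ → EuclideanSpace ℝ (Fin n)) (d : EuclideanSpace ℝ (Fin n)) (hd : d ≠ 0)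
    (dmin dmax : ℝ) (hdmin : 0 < dmin)
    (hdb : ∀ ℓ, dmin ≤ ‖ds ℓ‖ ∧ ‖ds ℓ‖ ≤ dmax)
    (hxs : Filter.Tendsto xs Filter.atTop (nhds xhat))
    (hαpos : ∀ ℓ, 0 < αs ℓ)
    (hαs : Filter.Tendsto αs Filter.atTop (nhds 0))
    (hds : Filter.Tendsto ds Filter.atTop (nhds d))
    (ρ : ℝ → ℝ) (hρ : ∀ a, 0 ≤ ρ a)
    (hρo : Filter.Tendsto (fun a => ρ a / a) (nhdsWithin 0 (Set.Ioi 0)) (nhds 0))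
    (hfail : ∀ ℓ, -ρ (αs ℓ) ≤ f (xs ℓ + αs ℓ • ds ℓ) - f (xs ℓ)) :
    0 ≤ clarkeDeriv f xhat d := by
  classical
  set g : EuclideanSpace ℝ (Fin n) × ℝ → ℝ :=
    fun p => (f (p.1 + p.2 • d) - f p.1) / p.2 with hg
  set F : Filter (EuclideanSpace ℝ (Fin n) × ℝ) :=
    (nhds xhat) ×ˢ (nhdsWithin 0 (Set.Ioi 0)) with hF
  set p : ℕ → EuclideanSpace ℝ (Fin n) × ℝ := fun ℓ => (xs ℓ, αs ℓ) with hpdef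
  have hα0 : Filter.Tendsto αs Filter.atTop (nhdsWithin 0 (Set.Ioi 0)) := by
    rw [tendsto_nhdsWithin_iff]
    exact ⟨hαs, Filter.Eventually.of_forall fun ℓ => hαpos ℓ⟩
  have hp : Filter.Tendsto p Filter.atTop F := hxs.prodMk hα0
  -- upper bound for g eventually in F
  have hM : (0:ℝ) < ‖d‖ + 1 := by positivity
  have hub : ∀ᶠ q in F, g q ≤ L * ‖d‖ := by
    have h1 : ∀ᶠ y in nhds xhat, dist y xhat < r / 2 :=
      Metric.eventually_nhds_iff_ball.mpr ⟨r / 2, by linarith, fun y hy => hy⟩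
    have h2 : ∀ᶠ t in nhdsWithin (0:ℝ) (Set.Ioi 0),
        0 < t ∧ t < (r / 2) / (‖d‖ + 1) := by
      filter_upwards [eventually_nhdsWithin_of_eventually_nhds
        (Metric.eventually_nhds_iff_ball.mpr
          ⟨(r / 2) / (‖d‖ + 1), by positivity,
            fun t ht => lt_of_le_of_lt (le_abs_self t) (by simpa [Real.dist_eq] using ht)⟩),
        self_mem_nhdsWithin] with t h ht
      exact ⟨ht, h⟩
    filter_upwards [Filter.Eventually.prod_mk h1 h2] with q hq
    obtain ⟨hy, ht, htr⟩ := hq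
    have hy1 : q.1 ∈ Metric.ball xhat r := by
      rw [Metric.mem_ball]; linarith
    have hy2 : q.1 + q.2 • d ∈ Metric.ball xhat r := by
      rw [Metric.mem_ball]
      have hdist : dist (q.1 + q.2 • d) q.1 = q.2 * ‖d‖ := by
        rw [dist_eq_norm]
        simp [norm_smul, abs_of_pos ht]
      have h3 : q.2 * ‖d‖ ≤ q.2 * (‖d‖ + 1) := by nlinarith
      have h4 : q.2 * (‖d‖ + 1) < r / 2 := (lt_div_iff₀ hM).mp htr
      calc dist (q.1 + q.2 • d) xhat ≤ dist (q.1 + q.2 • d) q.1 + dist q.1 xhat :=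
            dist_triangle _ _ _
        _ < q.2 * ‖d‖ + r / 2 := by rw [hdist]; linarith
        _ ≤ r := by linarith
    have hlipq := hlip _ hy2 _ hy1
    have hnorm : ‖q.1 + q.2 • d - q.1‖ = q.2 * ‖d‖ := by
      simp [norm_smul, abs_of_pos ht]
    rw [hnorm] at hlipq
    have hle : f (q.1 + q.2 • d) - f q.1 ≤ L * (q.2 * ‖d‖) :=
      le_trans (le_abs_self _) hlipq
    show (f (q.1 + q.2 • d) - f q.1) / q.2 ≤ L * ‖d‖
    rw [div_le_iff₀ ht]
    calc f (q.1 + q.2 • d) - f q.1 ≤ L * (q.2 * ‖d‖) := hle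
      _ = L * ‖d‖ * q.2 := by ring
  -- lower bound sequence
  set h : ℕ → ℝ := fun ℓ => -(ρ (αs ℓ) / αs ℓ) - L * ‖d - ds ℓ‖ with hh
  have hh0 : Filter.Tendsto h Filter.atTop (nhds 0) := by
    have t1 : Filter.Tendsto (fun ℓ => ρ (αs ℓ) / αs ℓ) Filter.atTop (nhds 0) :=
      hρo.comp hα0
    have t2 : Filter.Tendsto (fun ℓ => ‖d - ds ℓ‖) Filter.atTop (nhds 0) := by
      have t3 : Filter.Tendsto (fun ℓ => d - ds ℓ) Filter.atTop (nhds (d - d)) :=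
        tendsto_const_nhds.sub hds
      rw [sub_self] at t3
      simpa using t3.norm
    have := (t1.neg).sub (t2.const_mul L)
    simpa using this
  -- eventually h ℓ ≤ g (p ℓ)
  have hkey : ∀ᶠ ℓ in Filter.atTop, h ℓ ≤ g (p ℓ) := by
    have hMd : (0:ℝ) < dmax + ‖d‖ + 1 := by
      have := (hdmin.trans_le (hdb 0).1).trans_le (hdb 0).2
      positivity
    have e1 : ∀ᶠ ℓ in Filter.atTop, dist (xs ℓ) xhat < r / 2 :=
      hxs (Metric.eventually_nhds_iff_ball.mpr ⟨r / 2, by linarith, fun y hy => hy⟩)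
    have e2 : ∀ᶠ ℓ in Filter.atTop, αs ℓ < (r / 2) / (dmax + ‖d‖ + 1) := by
      have e3 := hαs (Metric.eventually_nhds_iff_ball.mpr
        ⟨(r / 2) / (dmax + ‖d‖ + 1), by positivity, fun t ht => ht⟩)
      filter_upwards [e3] with ℓ hℓ
      have : |αs ℓ| < (r / 2) / (dmax + ‖d‖ + 1) := by
        simpa [Real.dist_eq] using hℓ
      exact lt_of_le_of_lt (le_abs_self _) this
    filter_upwards [e1, e2] with ℓ h1 h2
    have hα := hαpos ℓ
    have hb1 : xs ℓ ∈ Metric.ball xhat r := by rw [Metric.mem_ball]; linarith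
    have hstep : αs ℓ * (dmax + ‖d‖ + 1) < r / 2 := (lt_div_iff₀ hMd).mp h2
    have hball : ∀ v : EuclideanSpace ℝ (Fin n),
        ‖v‖ ≤ dmax + ‖d‖ → xs ℓ + αs ℓ • v ∈ Metric.ball xhat r := by
      intro v hv
      rw [Metric.mem_ball]
      have hdist : dist (xs ℓ + αs ℓ • v) (xs ℓ) = αs ℓ * ‖v‖ := by
        rw [dist_eq_norm]; simp [norm_smul, abs_of_pos hα]
      calc dist (xs ℓ + αs ℓ • v) xhat ≤ dist (xs ℓ + αs ℓ • v) (xs ℓ) + dist (xs ℓ) xhat :=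
            dist_triangle _ _ _
        _ < αs ℓ * ‖v‖ + r / 2 := by rw [hdist]; linarith
        _ ≤ r := by nlinarith
    have hb2 : xs ℓ + αs ℓ • ds ℓ ∈ Metric.ball xhat r := by
      refine hball _ ?_
      have := (hdb ℓ).2
      linarith [norm_nonneg d]
    have hb3 : xs ℓ + αs ℓ • d ∈ Metric.ball xhat r := by
      refine hball _ ?_
      have := (hdb ℓ).2
      have := hdmin.trans_le (hdb ℓ).1
      linarith
    have hlip2 := hlip _ hb3 _ hb2
    have hnorm : ‖(xs ℓ + αs ℓ • d) - (xs ℓ + αs ℓ • ds ℓ)‖ = αs ℓ * ‖d - ds ℓ‖ := by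
      have heq : (xs ℓ + αs ℓ • d) - (xs ℓ + αs ℓ • ds ℓ) = αs ℓ • (d - ds ℓ) := by
        module
      rw [heq, norm_smul, Real.norm_eq_abs, abs_of_pos hα]
    rw [hnorm] at hlip2
    have hdiff : f (xs ℓ + αs ℓ • ds ℓ) - f (xs ℓ + αs ℓ • d) ≤ L * (αs ℓ * ‖d - ds ℓ‖) := by
      have habs := neg_abs_le (f (xs ℓ + αs ℓ • d) - f (xs ℓ + αs ℓ • ds ℓ))
      linarith
    have hlow : -ρ (αs ℓ) - L * (αs ℓ * ‖d - ds ℓ‖) ≤ f (xs ℓ + αs ℓ • d) - f (xs ℓ) := by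
      have := hfail ℓ
      linarith
    show h ℓ ≤ (f (xs ℓ + αs ℓ • d) - f (xs ℓ)) / αs ℓ
    rw [hh, le_div_iff₀ hα]
    have hrw : (-(ρ (αs ℓ) / αs ℓ) - L * ‖d - ds ℓ‖) * αs ℓ
        = -ρ (αs ℓ) - L * (αs ℓ * ‖d - ds ℓ‖) := by
      field_simp
    rw [hrw]
    exact hlow
  -- assemble
  have hub_seq : ∀ᶠ ℓ in Filter.atTop, g (p ℓ) ≤ L * ‖d‖ := hp.eventually hub
  have step1 : (0:ℝ) ≤ Filter.limsup (fun ℓ => g (p ℓ)) Filter.atTop := by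
    have hls : Filter.limsup h Filter.atTop = 0 := hh0.limsup_eq
    calc (0:ℝ) = Filter.limsup h Filter.atTop := hls.symm
      _ ≤ Filter.limsup (fun ℓ => g (p ℓ)) Filter.atTop :=
          Filter.limsup_le_limsup hkey hh0.isCoboundedUnder_le ⟨L * ‖d‖, hub_seq⟩
  have step2 : Filter.limsup (fun ℓ => g (p ℓ)) Filter.atTop ≤ Filter.limsup g F := by
    have hmap : Filter.limsup (fun ℓ => g (p ℓ)) Filter.atTop
        = Filter.limsup g (Filter.map p Filter.atTop) := by
      simp only [Filter.limsup, Filter.map_map]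
      rfl
    rw [hmap]
    have hcb : (Filter.map p Filter.atTop).IsCoboundedUnder (· ≤ ·) g := by
      have hlow : ∀ᶠ ℓ in Filter.atTop, h ℓ ≤ g (p ℓ) := hkey
      have hbdd : Filter.IsBoundedUnder (· ≥ ·) Filter.atTop (fun ℓ => g (p ℓ)) := by
        obtain ⟨c, hc⟩ := hh0.isBoundedUnder_ge
        exact ⟨c, by
          rw [Filter.eventually_map] at hc ⊢
          filter_upwards [hc, hkey] with ℓ h1 h2
          exact le_trans h1 h2⟩
      have := hbdd.isCoboundedUnder_le
      simpa only [Filter.IsCoboundedUnder, Filter.map_map, Function.comp_def] using this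
    exact Filter.limsup_le_limsup_of_le hp hcb ⟨L * ‖d‖, hub.mono fun q hq => hq⟩
  exact le_trans step1 step2
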